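/- Let p be an evenlevel(v) or oddlevel(v) path and let vertex u lie on p with tenacity(u) ≥ tenacity(v). Then u is BFS-honest with respect to p; furthermore, if tenacity(u) > tenacity(v), then the length of p from its starting unmatched vertex f to u equals minlevel(u). -/

import Mathlib

attribute [local instance] Classical.propDecidable

variable {V : Type*} [DecidableEq V]

namespace MV

/-- A walk is alternating (w.r.t. matching `M`) in the sense used for alternating paths
starting at an unmatched vertex: the `i`-th edge is matched iff `i` is odd. -/
def IsAlt (G : SimpleGraph V) (M : G.Subgraph) {a b : V} (w : G.Walk a b) : Prop :=
  ∀ i (h : i < w.edges.length), (w.edges.get ⟨i, h⟩ ∈ M.edgeSet ↔ Odd i)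

/-- length of a minimum even alternating path from an unmatched vertex to `v`. -/
noncomputable def evenlevel (G : SimpleGraph V) (M : G.Subgraph) (v : V) : ℕ∞ :=
  sInf {n : ℕ∞ | ∃ (f : V) (w : G.Walk f v),
    f ∉ M.verts ∧ w.IsPath ∧ IsAlt G M w ∧ Even w.length ∧ n = (w.length : ℕ∞)}

/-- length of a minimum odd alternating path from an unmatched vertex to `v`. -/
noncomputable def oddlevel (G : SimpleGraph V) (M : G.Subgraph) (v : V) : ℕ∞ :=
  sInf {n : ℕ∞ | ∃ (f : V) (w : G.Walk f v),
    f ∉ M.verts ∧ w.IsPath ∧ IsAlt G M w ∧ Odd w.length ∧ n = (w.length : ℕ∞)}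

noncomputable def tenacity (G : SimpleGraph V) (M : G.Subgraph) (v : V) : ℕ∞ :=
  evenlevel G M v + oddlevel G M v

noncomputable def minlevel (G : SimpleGraph V) (M : G.Subgraph) (v : V) : ℕ∞ :=
  min (evenlevel G M v) (oddlevel G M v)

noncomputable def maxlevel (G : SimpleGraph V) (M : G.Subgraph) (v : V) : ℕ∞ :=
  max (evenlevel G M v) (oddlevel G M v)

/-- the length of a minimum length augmenting path w.r.t. `M` (`⊤` if none exists). -/
noncomputable def lm (G : SimpleGraph V) (M : G.Subgraph) : ℕ∞ :=
  sInf {n : ℕ∞ | ∃ (f g : V) (w : G.Walk f g), f ∉ M.verts ∧ g ∉ M.verts ∧ f ≠ g ∧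
    w.IsPath ∧ IsAlt G M w ∧ Odd w.length ∧ n = (w.length : ℕ∞)}

/-- `w` is a minimum even- or odd-length alternating path from an unmatched vertex to `v`
  (an `evenlevel(v)` or `oddlevel(v)` path). -/
def IsMinPathTo (G : SimpleGraph V) (M : G.Subgraph) (v f : V) (w : G.Walk f v) : Prop :=
  f ∉ M.verts ∧ w.IsPath ∧ IsAlt G M w ∧
    ((Even w.length ∧ (w.length : ℕ∞) = evenlevel G M v) ∨
     (Odd w.length ∧ (w.length : ℕ∞) = oddlevel G M v))

/-- `b` is the vertex of tenacity greater than `tenacity v` on `w` furthest from the start. -/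
def IsFurthestHigh (G : SimpleGraph V) (M : G.Subgraph) (v : V) {f v' : V}
    (w : G.Walk f v') (b : V) : Prop :=
  ∃ hb : b ∈ w.support, tenacity G M v < tenacity G M b ∧
    ∀ u, ∀ hu : u ∈ w.support, tenacity G M v < tenacity G M u →
      (w.takeUntil u hu).length ≤ (w.takeUntil b hb).length

/-- `b` is the base of `v`: the furthest higher-tenacity vertex on every minimum
even or odd alternating path to `v`. -/
def IsBase (G : SimpleGraph V) (M : G.Subgraph) (v b : V) : Prop :=
  ∀ (f : V) (w : G.Walk f v), IsMinPathTo G M v f w → IsFurthestHigh G M v w b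

/-- minimum even length alternating path from `b` to `v` starting with an unmatched edge
  (`evenlevel(b; v)`). -/
noncomputable def evenlevelFrom (G : SimpleGraph V) (M : G.Subgraph) (b v : V) : ℕ∞ :=
  sInf {n : ℕ∞ | ∃ w : G.Walk b v,
    w.IsPath ∧ IsAlt G M w ∧ Even w.length ∧ n = (w.length : ℕ∞)}

/-- minimum odd length alternating path from `b` to `v` starting with an unmatched edge
  (`oddlevel(b; v)`). -/
noncomputable def oddlevelFrom (G : SimpleGraph V) (M : G.Subgraph) (b v : V) : ℕ∞ :=
  sInf {n : ℕ∞ | ∃ w : G.Walk b v,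
    w.IsPath ∧ IsAlt G M w ∧ Odd w.length ∧ n = (w.length : ℕ∞)}

def Outer (G : SimpleGraph V) (M : G.Subgraph) (v : V) : Prop :=
  evenlevel G M v < oddlevel G M v

/-- The blossom `B_{b,t}`, defined recursively, relative to a base function `bse`. -/
noncomputable def blossom (G : SimpleGraph V) (M : G.Subgraph) (bse : V → V) :
    ℕ → V → Set V
  | 0, _ => ∅
  | 1, _ => ∅
  | (t + 2), b =>
      {v | tenacity G M v = ((t + 2 : ℕ) : ℕ∞) ∧ bse v = b} ∪
      ⋃ v ∈ {u | (u = b ∨ (tenacity G M u = ((t + 2 : ℕ) : ℕ∞) ∧ bse u = b)) ∧ Outer G M u},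
        blossom G M bse t v

/-- The nesting depth `N(B_{b,t})`. -/
noncomputable def nestDepth (G : SimpleGraph V) (M : G.Subgraph) (bse : V → V) :
    ℕ → V → ℕ
  | 0, _ => 0
  | 1, _ => 0
  | (t + 2), b =>
      if {v | tenacity G M v = ((t + 2 : ℕ) : ℕ∞) ∧ bse v = b}.Nonempty then
        1 + sSup ((fun v => nestDepth G M bse t v) ''
          {u | (u = b ∨ (tenacity G M u = ((t + 2 : ℕ) : ℕ∞) ∧ bse u = b)) ∧ Outer G M u})
      else nestDepth G M bse t b

/-- `bse` assigns to each vertex of tenacity `< l_m` its (unique) base. -/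
def BaseFn (G : SimpleGraph V) (M : G.Subgraph) (bse : V → V) : Prop :=
  ∀ v, tenacity G M v < lm G M → IsBase G M v (bse v)

/-- `u` is a predecessor of `v`: `(u,v)` is the last edge of some `minlevel(v)` path. -/
def IsPred (G : SimpleGraph V) (M : G.Subgraph) (u v : V) : Prop :=
  ∃ (f : V) (w : G.Walk f v), f ∉ M.verts ∧ w.IsPath ∧ IsAlt G M w ∧
    (w.length : ℕ∞) = minlevel G M v ∧
    0 < w.length ∧ w.getVert (w.length - 1) = u

/-- A bridge is an edge of `G` that is not a prop. -/
def IsBridge (G : SimpleGraph V) (M : G.Subgraph) (u v : V) : Prop :=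
  G.Adj u v ∧ ¬ IsPred G M u v ∧ ¬ IsPred G M v u

/-- tenacity of an edge. -/
noncomputable def edgeTenacity (G : SimpleGraph V) (M : G.Subgraph) (u v : V) : ℕ∞ :=
  if s(u, v) ∈ M.edgeSet then oddlevel G M u + oddlevel G M v + 1
  else evenlevel G M u + evenlevel G M v + 1


section Aux

open SimpleGraph

set_option linter.unusedSectionVars false in
/-- alternating with offset `p`: edge `i` is matched iff `p + i` is odd. -/
def AltAt (G : SimpleGraph V) (M : G.Subgraph) (p : ℕ) {a b : V} (w : G.Walk a b) : Prop :=
  ∀ i (h : i < w.edges.length), (w.edges[i]'h ∈ M.edgeSet ↔ (p + i) % 2 = 1)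

set_option linter.unusedSectionVars false in
lemma isAlt_iff_altAt {G : SimpleGraph V} {M : G.Subgraph} {a b : V} {w : G.Walk a b} :
    IsAlt G M w ↔ AltAt G M 0 w := by
  constructor <;> intro h i hi
  · have := h i hi
    simp only [List.get_eq_getElem] at this
    rw [this, Nat.odd_iff]; omega
  · have := h i hi
    simp only [List.get_eq_getElem]
    rw [this, Nat.odd_iff]; omega

set_option linter.unusedSectionVars false in
lemma AltAt.congr {G : SimpleGraph V} {M : G.Subgraph} {p q : ℕ} {a b : V} {w : G.Walk a b}
    (h : AltAt G M p w) (hpq : p % 2 = q % 2) : AltAt G M q w := by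
  intro i hi; rw [h i hi]; omega

set_option linter.unusedSectionVars false in
lemma altAt_append_iff {G : SimpleGraph V} {M : G.Subgraph} {p : ℕ} {a b c : V}
    {w1 : G.Walk a b} {w2 : G.Walk b c} :
    AltAt G M p (w1.append w2) ↔ AltAt G M p w1 ∧ AltAt G M (p + w1.length) w2 := by
  have hlen : w1.edges.length = w1.length := Walk.length_edges w1
  have hE : (w1.append w2).edges = w1.edges ++ w2.edges := Walk.edges_append _ _
  constructor
  · intro h
    constructor
    · intro i hi
      have hi' : i < (w1.append w2).edges.length := by rw [hE, List.length_append]; omega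
      have H := h i hi'
      rwa [List.getElem_of_eq hE hi', List.getElem_append_left hi] at H
    · intro i hi
      have hi' : w1.edges.length + i < (w1.append w2).edges.length := by
        rw [hE, List.length_append]; omega
      have H := h (w1.edges.length + i) hi'
      rw [List.getElem_of_eq hE hi', List.getElem_append_right (by omega)] at H
      simp only [Nat.add_sub_cancel_left] at H
      rw [H]; omega
  · rintro ⟨h1, h2⟩ i hi
    have hi2 : i < w1.edges.length + w2.edges.length := by
      rw [hE, List.length_append] at hi; omega
    rw [List.getElem_of_eq hE hi]
    by_cases hc : i < w1.edges.length
    · rw [List.getElem_append_left hc]; exact h1 i hc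
    · have hc2 : i - w1.edges.length < w2.edges.length := by omega
      rw [List.getElem_append_right (by omega), h2 (i - w1.edges.length) hc2]; omega

set_option linter.unusedSectionVars false in
lemma AltAt.reverse {G : SimpleGraph V} {M : G.Subgraph} {p q : ℕ} {a b : V} {w : G.Walk a b}
    (h : AltAt G M p w) (hq : (p + w.length + 1) % 2 = q % 2) : AltAt G M q w.reverse := by
  intro i hi
  have hlen : w.edges.length = w.length := Walk.length_edges w
  have hE : w.reverse.edges = w.edges.reverse := Walk.edges_reverse w
  have hilen : i < w.edges.reverse.length := by rw [← hE]; exact hi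
  have hi' : w.edges.length - 1 - i < w.edges.length := by
    rw [List.length_reverse] at hilen; omega
  rw [List.getElem_of_eq hE hi, List.getElem_reverse, h _ hi']
  rw [List.length_reverse] at hilen
  omega

/-- the level of `v` of the parity of `p`. -/
noncomputable def lvl (G : SimpleGraph V) (M : G.Subgraph) (p : ℕ) (v : V) : ℕ∞ :=
  sInf {n : ℕ∞ | ∃ (f : V) (w : G.Walk f v),
    f ∉ M.verts ∧ w.IsPath ∧ IsAlt G M w ∧ w.length % 2 = p % 2 ∧ n = (w.length : ℕ∞)}

lemma lvl_eq_evenlevel {G : SimpleGraph V} {M : G.Subgraph} {p : ℕ} {v : V} (hp : p % 2 = 0) :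
    lvl G M p v = evenlevel G M v := by
  unfold lvl evenlevel
  congr 1
  ext n
  constructor
  · rintro ⟨f, w, h1, h2, h3, h4, h5⟩
    exact ⟨f, w, h1, h2, h3, by rw [Nat.even_iff]; omega, h5⟩
  · rintro ⟨f, w, h1, h2, h3, h4, h5⟩
    rw [Nat.even_iff] at h4
    exact ⟨f, w, h1, h2, h3, by omega, h5⟩

lemma lvl_eq_oddlevel {G : SimpleGraph V} {M : G.Subgraph} {p : ℕ} {v : V} (hp : p % 2 = 1) :
    lvl G M p v = oddlevel G M v := by
  unfold lvl oddlevel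
  congr 1
  ext n
  constructor
  · rintro ⟨f, w, h1, h2, h3, h4, h5⟩
    exact ⟨f, w, h1, h2, h3, by rw [Nat.odd_iff]; omega, h5⟩
  · rintro ⟨f, w, h1, h2, h3, h4, h5⟩
    rw [Nat.odd_iff] at h4
    exact ⟨f, w, h1, h2, h3, by omega, h5⟩

lemma tenacity_eq_lvl {G : SimpleGraph V} {M : G.Subgraph} (p : ℕ) (v : V) :
    tenacity G M v = lvl G M p v + lvl G M (p + 1) v := by
  rcases Nat.mod_two_eq_zero_or_one p with hp | hp
  · rw [lvl_eq_evenlevel hp, lvl_eq_oddlevel (by omega)]; rfl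
  · rw [lvl_eq_oddlevel hp, lvl_eq_evenlevel (by omega), tenacity, add_comm]

lemma minlevel_eq_lvl {G : SimpleGraph V} {M : G.Subgraph} (p : ℕ) (v : V) :
    minlevel G M v = min (lvl G M p v) (lvl G M (p + 1) v) := by
  rcases Nat.mod_two_eq_zero_or_one p with hp | hp
  · rw [lvl_eq_evenlevel hp, lvl_eq_oddlevel (by omega)]; rfl
  · rw [lvl_eq_oddlevel hp, lvl_eq_evenlevel (by omega), minlevel, min_comm]

lemma lvl_le {G : SimpleGraph V} {M : G.Subgraph} {p : ℕ} {v f : V} {w : G.Walk f v}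
    (hf : f ∉ M.verts) (hwp : w.IsPath) (hwa : IsAlt G M w) (hpar : w.length % 2 = p % 2) :
    lvl G M p v ≤ (w.length : ℕ∞) :=
  sInf_le ⟨f, w, hf, hwp, hwa, hpar, rfl⟩

set_option linter.unusedSectionVars false in
lemma length_eq_zero_imp {G : SimpleGraph V} {a b : V} {w : G.Walk a b} (h : w.length = 0) :
    a = b := by
  cases w with
  | nil => rfl
  | cons h' p => simp [Walk.length_cons] at h

lemma length_takeUntil_lt {G : SimpleGraph V} {a b y : V} (r : G.Walk a b) (hy : y ∈ r.support)
    (hne : y ≠ b) : (r.takeUntil y hy).length < r.length := by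
  have hlen := congrArg Walk.length (r.take_spec hy)
  rw [Walk.length_append] at hlen
  have h2 : (r.dropUntil y hy).length ≠ 0 := fun h0 => hne (length_eq_zero_imp h0)
  omega

set_option linter.unusedSectionVars false in
lemma isPath_append_of {G : SimpleGraph V} {a b c : V} {r : G.Walk a b} {x : G.Walk b c}
    (hr : r.IsPath) (hx : x.IsPath) (hsep : ∀ y, y ∈ r.support → y ∈ x.support → y = b) :
    (r.append x).IsPath := by
  rw [Walk.isPath_def, Walk.support_append, List.nodup_append]
  refine ⟨hr.support_nodup, hx.support_nodup.tail, ?_⟩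
  intro y hy1 y' hy2 hyy'
  subst hyy'
  have hyb : y = b := hsep y hy1 (List.mem_of_mem_tail hy2)
  subst hyb
  have := hx.support_nodup
  rw [Walk.support_eq_cons] at this
  exact (List.nodup_cons.mp this).1 hy2

/-- Master splice lemma: given the minimum path `w` to `v` and any alternating path `r`
from an unmatched vertex ending on the part of `w` from `u` onwards, either we obtain an
alternating path to `u` of parity opposite to the position of `u` on `w` and of length at
most `r.length` plus the length of the rest of `w`, or `r` is at least as long as the
position of `u` on `w`. -/
lemma master {G : SimpleGraph V} {M : G.Subgraph} {f v : V} (w : G.Walk f v)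
    (hwp : w.IsPath) (hwa : AltAt G M 0 w)
    (hmin : (w.length : ℕ∞) = lvl G M w.length v)
    (u : V) (hu : u ∈ w.support) :
    ∀ (n : ℕ) (g z : V) (r : G.Walk g z), r.length ≤ n → g ∉ M.verts → r.IsPath →
      AltAt G M 0 r → z ∈ (w.dropUntil u hu).support →
      lvl G M ((w.takeUntil u hu).length + 1) u
          ≤ ((r.length + (w.dropUntil u hu).length : ℕ) : ℕ∞)
        ∨ (w.takeUntil u hu).length ≤ r.length := by
  have hsplit := w.take_spec hu
  have hAlt : AltAt G M 0 ((w.takeUntil u hu).append (w.dropUntil u hu)) := by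
    rw [hsplit]; exact hwa
  obtain ⟨hw1a, hw2a⟩ := altAt_append_iff.mp hAlt
  have hLen : (w.takeUntil u hu).length + (w.dropUntil u hu).length = w.length := by
    have := congrArg Walk.length hsplit
    rwa [Walk.length_append] at this
  have hw2p : (w.dropUntil u hu).IsPath := hwp.dropUntil hu
  intro n
  induction n using Nat.strong_induction_on with
  | _ n IH =>
    intro g z r hrn hg hrp hra hz
    by_cases hcase : ∃ y, y ∈ r.support ∧ y ≠ z ∧ y ∈ (w.dropUntil u hu).support
    · obtain ⟨y, hy, hyne, hyw2⟩ := hcase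
      have hlt := length_takeUntil_lt r hy hyne
      have hr'a : AltAt G M 0 (r.takeUntil y hy) := by
        have : AltAt G M 0 ((r.takeUntil y hy).append (r.dropUntil y hy)) := by
          rw [r.take_spec hy]; exact hra
        exact (altAt_append_iff.mp this).1
      rcases IH (r.takeUntil y hy).length (by omega) g y (r.takeUntil y hy) le_rfl hg
          (hrp.takeUntil hy) hr'a hyw2 with h | h
      · left
        refine le_trans h (Nat.cast_le.mpr ?_)
        omega
      · right; omega
    · push_neg at hcase
      have hsep : ∀ y, y ∈ r.support → y ∈ (w.dropUntil u hu).support → y = z := by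
        intro y h1 h2
        by_contra hne
        exact hcase y h1 hne h2
      have hw2split := (w.dropUntil u hu).take_spec hz
      have hjs : ((w.dropUntil u hu).takeUntil z hz).length
          + ((w.dropUntil u hu).dropUntil z hz).length = (w.dropUntil u hu).length := by
        have := congrArg Walk.length hw2split
        rwa [Walk.length_append] at this
      have hw2Alt : AltAt G M (0 + (w.takeUntil u hu).length)
          (((w.dropUntil u hu).takeUntil z hz).append ((w.dropUntil u hu).dropUntil z hz)) := by
        rw [hw2split]; exact hw2a
      obtain ⟨hta, hda⟩ := altAt_append_iff.mp hw2Alt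
      by_cases hpar : r.length % 2
          = ((w.takeUntil u hu).length + ((w.dropUntil u hu).takeUntil z hz).length) % 2
      · -- forward splice to `v`; by minimality of `w` we get `k ≤ r.length`
        right
        set x := (w.dropUntil u hu).dropUntil z hz with hxdef
        have hxp : x.IsPath := hw2p.dropUntil hz
        have hqp : (r.append x).IsPath := by
          refine isPath_append_of hrp hxp ?_
          intro y h1 h2
          exact hsep y h1 (Walk.support_dropUntil_subset _ hz h2)
        have hqa : AltAt G M 0 (r.append x) := by
          refine altAt_append_iff.mpr ⟨hra, ?_⟩
          refine hda.congr ?_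
          omega
        have hqlen : (r.append x).length = r.length + x.length := Walk.length_append _ _
        have hle : lvl G M w.length v ≤ ((r.append x).length : ℕ∞) := by
          refine lvl_le hg hqp (isAlt_iff_altAt.mpr hqa) ?_
          rw [hqlen]
          omega
        rw [← hmin] at hle
        have := Nat.cast_le.mp hle
        rw [hqlen] at this
        omega
      · -- backward splice to `u`
        left
        set t := (w.dropUntil u hu).takeUntil z hz with htdef
        have htp : t.reverse.IsPath := (hw2p.takeUntil hz).reverse
        have hqp : (r.append t.reverse).IsPath := by
          refine isPath_append_of hrp htp ?_
          intro y h1 h2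
          refine hsep y h1 ?_
          rw [Walk.support_reverse, List.mem_reverse] at h2
          exact Walk.support_takeUntil_subset _ hz h2
        have hqa : AltAt G M 0 (r.append t.reverse) := by
          refine altAt_append_iff.mpr ⟨hra, ?_⟩
          refine hta.reverse ?_
          omega
        have hqlen : (r.append t.reverse).length = r.length + t.length := by
          rw [Walk.length_append, Walk.length_reverse]
        have hle : lvl G M ((w.takeUntil u hu).length + 1) u
            ≤ ((r.append t.reverse).length : ℕ∞) := by
          refine lvl_le hg hqp (isAlt_iff_altAt.mpr hqa) ?_
          rw [hqlen]
          omega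
        refine le_trans hle ?_
        rw [hqlen]
        refine Nat.cast_le.mpr ?_
        omega

end Aux

/-- Limited BFS-honesty: if `u` lies on an `evenlevel(v)` or `oddlevel(v)` path `w`
with `tenacity(u) ≥ tenacity(v)`, then `u` is BFS-honest w.r.t. `w`; and if
`tenacity(u) > tenacity(v)` then the distance from the start to `u` equals `minlevel(u)`. -/
theorem stmt2 (G : SimpleGraph V) (M : G.Subgraph) (hM : M.IsMatching)
    (v f : V) (w : G.Walk f v) (hw : IsMinPathTo G M v f w)
    (u : V) (hu : u ∈ w.support) (ht : tenacity G M v ≤ tenacity G M u) :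
    ((Even (w.takeUntil u hu).length →
        (((w.takeUntil u hu).length : ℕ∞)) = evenlevel G M u) ∧
     (Odd (w.takeUntil u hu).length →
        (((w.takeUntil u hu).length : ℕ∞)) = oddlevel G M u)) ∧
    (tenacity G M v < tenacity G M u →
        (((w.takeUntil u hu).length : ℕ∞)) = minlevel G M u) := by
  classical
  obtain ⟨hf, hwp, hwalt, hdisj⟩ := hw
  have hwa : AltAt G M 0 w := isAlt_iff_altAt.mp hwalt
  have hmin : (w.length : ℕ∞) = lvl G M w.length v := by
    rcases hdisj with ⟨hev, heq⟩ | ⟨hod, heq⟩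
    · rw [lvl_eq_evenlevel (by rw [Nat.even_iff] at hev; omega)]; exact heq
    · rw [lvl_eq_oddlevel (by rw [Nat.odd_iff] at hod; omega)]; exact heq
  set k := (w.takeUntil u hu).length with hkdef
  set s := (w.dropUntil u hu).length with hsdef
  have hLen : k + s = w.length := by
    have := congrArg SimpleGraph.Walk.length (w.take_spec hu)
    rwa [SimpleGraph.Walk.length_append] at this
  have hw1a : AltAt G M 0 (w.takeUntil u hu) := by
    have : AltAt G M 0 ((w.takeUntil u hu).append (w.dropUntil u hu)) := by
      rw [w.take_spec hu]; exact hwa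
    exact (altAt_append_iff.mp this).1
  have hk_le : lvl G M k u ≤ (k : ℕ∞) :=
    lvl_le hf (hwp.takeUntil hu) (isAlt_iff_altAt.mpr hw1a) rfl
  have htv : tenacity G M v = (w.length : ℕ∞) + lvl G M (w.length + 1) v := by
    rw [tenacity_eq_lvl w.length v, ← hmin]
  -- honesty: lvl G M k u = k
  have hlvlk : lvl G M k u = (k : ℕ∞) := by
    by_contra hne
    have hlt : lvl G M k u < (k : ℕ∞) := lt_of_le_of_ne hk_le hne
    obtain ⟨nn, ⟨g, r, hg, hrp, hra, hparr, rfl⟩, hnlt⟩ := sInf_lt_iff.mp hlt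
    have hm : r.length < k := by exact_mod_cast hnlt
    rcases master w hwp hwa hmin u hu r.length g u r le_rfl hg hrp (isAlt_iff_altAt.mp hra)
        (SimpleGraph.Walk.start_mem_support _) with hoth | hbad
    swap
    · omega
    have h1 : lvl G M k u ≤ (r.length : ℕ∞) := lvl_le hg hrp hra hparr
    have htu_le : tenacity G M u ≤ ((r.length + (r.length + s) : ℕ) : ℕ∞) := by
      rw [tenacity_eq_lvl k u]
      calc lvl G M k u + lvl G M (k + 1) u
          ≤ (r.length : ℕ∞) + ((r.length + s : ℕ) : ℕ∞) := add_le_add h1 hoth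
        _ = ((r.length + (r.length + s) : ℕ) : ℕ∞) := (Nat.cast_add _ _).symm
    by_cases hetop : lvl G M (w.length + 1) v = ⊤
    · have hvt : tenacity G M v = ⊤ := by rw [htv, hetop, add_top]
      rw [hvt] at ht
      have : (⊤ : ℕ∞) ≤ ((r.length + (r.length + s) : ℕ) : ℕ∞) := le_trans ht htu_le
      exact (ENat.coe_ne_top _) (top_le_iff.mp this)
    · have hee : lvl G M (w.length + 1) v < lvl G M (w.length + 1) v + 1 :=
        (ENat.lt_add_one_iff hetop).mpr le_rfl
      obtain ⟨nn', ⟨g', ρ, hg', hρp, hρa, hparρ, rfl⟩, hc1⟩ := sInf_lt_iff.mp hee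
      have hce : (ρ.length : ℕ∞) ≤ lvl G M (w.length + 1) v := (ENat.lt_add_one_iff hetop).mp hc1
      have hlow : ((w.length + ρ.length : ℕ) : ℕ∞) ≤ tenacity G M v := by
        rw [htv, Nat.cast_add]
        exact add_le_add le_rfl hce
      rcases master w hwp hwa hmin u hu ρ.length g' v ρ le_rfl hg' hρp (isAlt_iff_altAt.mp hρa)
          (SimpleGraph.Walk.end_mem_support _) with h2 | h2
      · have htu2 : tenacity G M u ≤ ((r.length + (ρ.length + s) : ℕ) : ℕ∞) := by
          rw [tenacity_eq_lvl k u]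
          calc lvl G M k u + lvl G M (k + 1) u
              ≤ (r.length : ℕ∞) + ((ρ.length + s : ℕ) : ℕ∞) := add_le_add h1 h2
            _ = ((r.length + (ρ.length + s) : ℕ) : ℕ∞) := (Nat.cast_add _ _).symm
        have hchain := le_trans hlow (le_trans ht htu2)
        have := Nat.cast_le.mp hchain
        omega
      · have hchain := le_trans hlow (le_trans ht htu_le)
        have := Nat.cast_le.mp hchain
        omega
  refine ⟨⟨?_, ?_⟩, ?_⟩
  · intro hek
    have hp : k % 2 = 0 := by rw [Nat.even_iff] at hek; omega
    exact hlvlk.symm.trans (lvl_eq_evenlevel hp)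
  · intro hok
    have hp : k % 2 = 1 := by rw [Nat.odd_iff] at hok; omega
    exact hlvlk.symm.trans (lvl_eq_oddlevel hp)
  · intro hstrict
    have hother_ge : (k : ℕ∞) ≤ lvl G M (k + 1) u := by
      by_contra hlt2
      push_neg at hlt2
      have hetop : lvl G M (w.length + 1) v ≠ ⊤ := by
        intro htop
        have hvt : tenacity G M v = ⊤ := by rw [htv, htop, add_top]
        rw [hvt] at hstrict
        exact not_top_lt hstrict
      have hee : lvl G M (w.length + 1) v < lvl G M (w.length + 1) v + 1 :=
        (ENat.lt_add_one_iff hetop).mpr le_rfl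
      obtain ⟨nn', ⟨g', ρ, hg', hρp, hρa, hparρ, rfl⟩, hc1⟩ := sInf_lt_iff.mp hee
      have hce : (ρ.length : ℕ∞) ≤ lvl G M (w.length + 1) v := (ENat.lt_add_one_iff hetop).mp hc1
      have hlow : ((w.length + ρ.length : ℕ) : ℕ∞) ≤ tenacity G M v := by
        rw [htv, Nat.cast_add]
        exact add_le_add le_rfl hce
      rcases master w hwp hwa hmin u hu ρ.length g' v ρ le_rfl hg' hρp (isAlt_iff_altAt.mp hρa)
          (SimpleGraph.Walk.end_mem_support _) with h2 | h2
      · have htu2 : tenacity G M u ≤ ((k + (ρ.length + s) : ℕ) : ℕ∞) := by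
          rw [tenacity_eq_lvl k u, hlvlk]
          calc (k : ℕ∞) + lvl G M (k + 1) u
              ≤ (k : ℕ∞) + ((ρ.length + s : ℕ) : ℕ∞) := add_le_add le_rfl h2
            _ = ((k + (ρ.length + s) : ℕ) : ℕ∞) := (Nat.cast_add _ _).symm
        have : tenacity G M u ≤ tenacity G M v :=
          le_trans htu2 (le_trans (Nat.cast_le.mpr (by omega)) hlow)
        exact absurd hstrict (not_lt.mpr this)
      · have htu2 : tenacity G M u < ((k + k : ℕ) : ℕ∞) := by
          rw [tenacity_eq_lvl k u, hlvlk, Nat.cast_add]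
          exact WithTop.add_lt_add_left (ENat.coe_ne_top k) hlt2
        have : tenacity G M u < tenacity G M v :=
          lt_of_lt_of_le htu2 (le_trans (Nat.cast_le.mpr (by omega)) hlow)
        exact absurd hstrict (lt_asymm this)
    have hmineq : minlevel G M u = (k : ℕ∞) := by
      rw [minlevel_eq_lvl k u, hlvlk]
      exact min_eq_left hother_ge
    exact hmineq.symm


end MV
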